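/- Let G be an Abelian group acting on X, A ⊆ G finite nonempty, Y ⊆ X finite nonempty, with |A · Y| ≤ α|Y|. Then there exists a nonempty subset Z ⊆ Y such that |Aⁿ · Z| ≤ αⁿ|Z| for every integer n ≥ 1. -/

import Mathlib

open Pointwise

section Aux

variable {G X : Type*} [CommGroup G] [MulAction G X] [DecidableEq G] [DecidableEq X]

private lemma petridis_key (A : Finset G) (Z : Finset X) (β : ℝ) (hβ : 0 ≤ β)
    (hAZ : ((A • Z).card : ℝ) ≤ β * Z.card)
    (hmin : ∀ Z' ⊆ Z, β * Z'.card ≤ ((A • Z').card : ℝ)) :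
    ∀ C : Finset G, (((A * C) • Z).card : ℝ) ≤ β * ((C • Z).card : ℝ) := by
  intro C
  induction C using Finset.induction_on with
  | empty => simp
  | @insert x C' hx ih =>
    classical
    set Zx := Z.filter (fun z => x • z ∈ C' • Z) with hZxdef
    have hZxZ : Zx ⊆ Z := Finset.filter_subset _ _
    -- x • (A • Zx) lands inside (A * C') • Z
    have h1 : x • (A • Zx) ⊆ (A * C') • Z := by
      intro u hu
      rw [Finset.mem_smul_finset] at hu
      obtain ⟨v, hv, rfl⟩ := hu
      rw [Finset.mem_smul] at hv
      obtain ⟨a, ha, z, hz, rfl⟩ := hv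
      rw [hZxdef, Finset.mem_filter] at hz
      obtain ⟨hzZ, hxz⟩ := hz
      rw [Finset.mem_smul] at hxz
      obtain ⟨c, hc, z', hz', hczz⟩ := hxz
      rw [Finset.mem_smul]
      refine ⟨a * c, Finset.mul_mem_mul ha hc, z', hz', ?_⟩
      rw [mul_smul, hczz]
      exact smul_comm a x z
    have hAx : (A * {x}) • Z = x • (A • Z) := by
      have : A * {x} = x • A := by
        ext g
        simp only [Finset.mem_mul, Finset.mem_singleton, Finset.mem_smul_finset, smul_eq_mul]
        constructor
        · rintro ⟨a, ha, b, hb, rfl⟩; exact ⟨a, ha, by rw [hb, mul_comm]⟩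
        · rintro ⟨a, ha, rfl⟩; exact ⟨a, ha, x, rfl, mul_comm a x⟩
      rw [this, smul_assoc]
    have h2 : (A * insert x C') • Z = (A * C') • Z ∪ x • (A • Z) := by
      rw [Finset.insert_eq, Finset.mul_union, Finset.union_smul, Finset.union_comm,
        Finset.mul_singleton]
      congr 1
      rw [← Finset.mul_singleton, hAx]
    have hsub2 : x • (A • Zx) ⊆ x • (A • Z) :=
      Finset.smul_finset_subset_smul_finset (Finset.smul_subset_smul_left hZxZ)
    -- set inclusion
    have h3 : (A * insert x C') • Z ⊆ (A * C') • Z ∪ (x • (A • Z) \ x • (A • Zx)) := by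
      rw [h2]
      intro u hu
      rw [Finset.mem_union] at hu ⊢
      rcases hu with hu | hu
      · exact Or.inl hu
      · by_cases h' : u ∈ x • (A • Zx)
        · exact Or.inl (h1 h')
        · exact Or.inr (Finset.mem_sdiff.2 ⟨hu, h'⟩)
    -- card of (insert x C') • Z
    have h4 : x • Z \ C' • Z = x • Z \ x • Zx := by
      ext u
      simp only [Finset.mem_sdiff, Finset.mem_smul_finset]
      constructor
      · rintro ⟨⟨z, hz, rfl⟩, hnot⟩
        refine ⟨⟨z, hz, rfl⟩, ?_⟩
        rintro ⟨z', hz', hzz⟩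
        have : z' = z := smul_left_cancel x hzz
        subst this
        exact hnot ((Finset.mem_filter.1 hz').2)
      · rintro ⟨⟨z, hz, rfl⟩, hnot⟩
        refine ⟨⟨z, hz, rfl⟩, fun hmem => hnot ?_⟩
        exact ⟨z, Finset.mem_filter.2 ⟨hz, hmem⟩, rfl⟩
    have h5 : (((insert x C') • Z).card : ℝ) = ((C' • Z).card : ℝ) + Z.card - Zx.card := by
      have e1 : (insert x C') • Z = C' • Z ∪ x • Z := by
        rw [Finset.insert_eq, Finset.union_smul, Finset.union_comm]
        rw [Finset.singleton_smul]
      have e2 : (C' • Z ∪ x • Z).card = (x • Z \ C' • Z).card + (C' • Z).card := by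
        rw [Finset.union_comm]
        exact (Finset.card_sdiff_add_card _ _).symm
      have e3 : (x • Z \ x • Zx).card = Z.card - Zx.card := by
        rw [Finset.card_sdiff_of_subset (Finset.smul_finset_subset_smul_finset hZxZ),
          Finset.card_smul_finset, Finset.card_smul_finset]
      rw [e1, e2, h4, e3]
      push_cast [Nat.cast_sub (Finset.card_le_card hZxZ)]
      ring
    -- card bound for the left side
    have h6 : (((A * insert x C') • Z).card : ℝ)
        ≤ ((A * C') • Z).card + (((A • Z).card : ℝ) - ((A • Zx).card : ℝ)) := by
      have hle := Finset.card_le_card h3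
      have hcard : ((A * C') • Z ∪ (x • (A • Z) \ x • (A • Zx))).card
          ≤ ((A * C') • Z).card + (x • (A • Z) \ x • (A • Zx)).card :=
        Finset.card_union_le _ _
      have hsd : ((x • (A • Z) \ x • (A • Zx)).card : ℝ)
          = ((A • Z).card : ℝ) - ((A • Zx).card : ℝ) := by
        have hle' : (A • Zx).card ≤ (A • Z).card :=
          Finset.card_le_card (Finset.smul_subset_smul_left hZxZ)
        rw [Finset.card_sdiff_of_subset hsub2, Finset.card_smul_finset, Finset.card_smul_finset]
        exact Nat.cast_sub hle'
      calc (((A * insert x C') • Z).card : ℝ)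
          ≤ (((A * C') • Z ∪ (x • (A • Z) \ x • (A • Zx))).card : ℝ) := by exact_mod_cast hle
        _ ≤ ((A * C') • Z).card + ((x • (A • Z) \ x • (A • Zx)).card : ℝ) := by
            exact_mod_cast hcard
        _ = ((A * C') • Z).card + (((A • Z).card : ℝ) - ((A • Zx).card : ℝ)) := by rw [hsd]
    calc (((A * insert x C') • Z).card : ℝ)
        ≤ ((A * C') • Z).card + (((A • Z).card : ℝ) - ((A • Zx).card : ℝ)) := h6
      _ ≤ β * ((C' • Z).card : ℝ) + (β * Z.card - β * Zx.card) := by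
          have := hmin Zx hZxZ
          have h' := hAZ
          gcongr
      _ = β * (((C' • Z).card : ℝ) + Z.card - Zx.card) := by ring
      _ = β * (((insert x C') • Z).card : ℝ) := by rw [h5]

end Aux

/-- If `G` is Abelian and `|A · Y| ≤ α|Y|`, there is a nonempty `Z ⊆ Y` with
`|Aⁿ · Z| ≤ αⁿ|Z|` for all `n ≥ 1`. -/
theorem stmt_15 {G X : Type*} [CommGroup G] [MulAction G X] [DecidableEq G] [DecidableEq X]
    (A : Finset G) (hA : A.Nonempty) (Y : Finset X) (hY : Y.Nonempty)
    (α : ℝ) (hα : 0 ≤ α)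
    (h : ((A • Y).card : ℝ) ≤ α * Y.card) :
    ∃ Z : Finset X, Z ⊆ Y ∧ Z.Nonempty ∧
      ∀ n : ℕ, 1 ≤ n → (((A ^ n) • Z).card : ℝ) ≤ α ^ n * Z.card := by
  classical
  have hYmem : Y ∈ Y.powerset.erase ∅ :=
    Finset.mem_erase_of_ne_of_mem hY.ne_empty (Finset.mem_powerset_self Y)
  obtain ⟨Z, hZmem, hZmin⟩ := Finset.exists_min_image (Y.powerset.erase ∅)
    (fun W => ((A • W).card : ℝ) / W.card) ⟨Y, hYmem⟩
  rw [Finset.mem_erase, Finset.mem_powerset] at hZmem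
  obtain ⟨hZne, hZY⟩ := hZmem
  have hZnonempty : Z.Nonempty := Finset.nonempty_iff_ne_empty.2 hZne
  have hZpos : (0 : ℝ) < Z.card := by exact_mod_cast hZnonempty.card_pos
  set β := ((A • Z).card : ℝ) / Z.card with hβdef
  have hβ : 0 ≤ β := div_nonneg (Nat.cast_nonneg _) (Nat.cast_nonneg _)
  have hAZ : ((A • Z).card : ℝ) = β * Z.card := by
    rw [hβdef, div_mul_cancel₀]
    exact hZpos.ne'
  have hβα : β ≤ α := by
    have hYpos : (0 : ℝ) < Y.card := by exact_mod_cast hY.card_pos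
    have := hZmin Y hYmem
    calc β ≤ ((A • Y).card : ℝ) / Y.card := this
      _ ≤ α := by rw [div_le_iff₀ hYpos]; exact h
  have hmin : ∀ Z' ⊆ Z, β * Z'.card ≤ ((A • Z').card : ℝ) := by
    intro Z' hZ'
    rcases Z'.eq_empty_or_nonempty with rfl | hZ'ne
    · simp
    · have hZ'mem : Z' ∈ Y.powerset.erase ∅ :=
        Finset.mem_erase_of_ne_of_mem hZ'ne.ne_empty (Finset.mem_powerset.2 (hZ'.trans hZY))
      have := hZmin Z' hZ'mem
      have hZ'pos : (0 : ℝ) < Z'.card := by exact_mod_cast hZ'ne.card_pos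
      rw [le_div_iff₀ hZ'pos] at this
      exact this
  refine ⟨Z, hZY, hZnonempty, ?_⟩
  have key : ∀ n : ℕ, 1 ≤ n → (((A ^ n) • Z).card : ℝ) ≤ β ^ n * Z.card := by
    intro n hn
    induction n with
    | zero => omega
    | succ m ih =>
      rcases Nat.eq_or_lt_of_le hn with h1 | h1
      · rw [← h1]
        simp only [pow_one]
        rw [hAZ]
      · have hm : 1 ≤ m := by omega
        have hstep := petridis_key A Z β hβ (le_of_eq hAZ) hmin (A ^ m)
        calc (((A ^ (m + 1)) • Z).card : ℝ)
            = (((A * A ^ m) • Z).card : ℝ) := by rw [← pow_succ']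
          _ ≤ β * (((A ^ m) • Z).card : ℝ) := hstep
          _ ≤ β * (β ^ m * Z.card) := by
              have := ih hm
              exact mul_le_mul_of_nonneg_left this hβ
          _ = β ^ (m + 1) * Z.card := by ring
  intro n hn
  calc (((A ^ n) • Z).card : ℝ) ≤ β ^ n * Z.card := key n hn
    _ ≤ α ^ n * Z.card :=
        mul_le_mul_of_nonneg_right (pow_le_pow_left₀ hβ hβα n) (Nat.cast_nonneg _)
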